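/- Let ξ and η be random variables with values in ℝ and ℝ^d respectively, whose joint law has a density p_{ξ,η} with respect to Lebesgue measure on ℝ^{1+d}. Let p_ξ(x) = ∫ p_{ξ,η}(x, y) dy and p_η(y) = ∫ p_{ξ,η}(x, y) dx denote the marginal densities, and for y with p_η(y) > 0 let p_{ξ|η}(x|y) = p_{ξ,η}(x, y)/p_η(y) denote the conditional density. Then for almost every y with respect to the law of η, (1/2) ∫ | p_ξ(x) − p_{ξ|η}(x|y) | dx ≤ φ(ξ, η). -/

import Mathlib

open MeasureTheory Real

/-- The uniform φ-mixing coefficient between two random variables `ξ` and `η`: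
`φ(ξ, η) = sup {|P(A) - P(A ∩ B)/P(B)| : A ∈ σ(ξ), B ∈ σ(η), P(B) ≠ 0}`. -/
noncomputable def phiCoef {Ω : Type*} [MeasurableSpace Ω] (P : Measure Ω)
    {E F : Type*} [MeasurableSpace E] [MeasurableSpace F] (ξ : Ω → E) (η : Ω → F) : ℝ :=
  sSup {r : ℝ | ∃ A B : Set Ω,
    MeasurableSet[MeasurableSpace.comap ξ inferInstance] A ∧
    MeasurableSet[MeasurableSpace.comap η inferInstance] B ∧ P B ≠ 0 ∧
    r = |(P A).toReal - (P (A ∩ B)).toReal / (P B).toReal|}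

open Set in
lemma approx_pos_part (h : ℝ → ℝ) (hm : Measurable h) (hi : Integrable h)
    {δ : ℝ} (hδ : 0 < δ) :
    ∃ s : Finset (ℚ × ℚ),
      ∫ x, max (h x) 0 ≤ (∫ x in ⋃ q ∈ s, Set.Ioo (q.1 : ℝ) (q.2 : ℝ), h x) + δ := by
  classical
  set ν : Measure ℝ := volume.withDensity fun x => ENNReal.ofReal |h x| with hν
  have habs : Integrable (fun x => |h x|) volume := hi.abs
  have hνE : ∀ E : Set ℝ, MeasurableSet E → ν E = ENNReal.ofReal (∫ x in E, |h x|) := by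
    intro E hE
    rw [hν, withDensity_apply _ hE,
      ← ofReal_integral_eq_lintegral_ofReal (habs.restrict)
        (Filter.Eventually.of_forall fun x => abs_nonneg _)]
  have hfin : IsFiniteMeasure ν := by
    constructor
    rw [hνE univ MeasurableSet.univ]
    exact ENNReal.ofReal_lt_top
  set U : Set ℝ := {x | 0 < h x} with hU
  have hUm : MeasurableSet U := measurableSet_lt measurable_const hm
  have hmax : ∫ x, max (h x) 0 = ∫ x in U, h x := by
    rw [← integral_indicator hUm]
    congr 1; ext x
    by_cases hx : x ∈ U
    · have hx' : 0 < h x := hx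
      simp [indicator_of_mem hx, max_eq_left hx'.le]
    · simp only [hU, mem_setOf_eq, not_lt] at hx
      rw [indicator_of_notMem (by simpa [hU] using not_lt.2 hx), max_eq_right hx]
  -- outer regularity
  have hε' : ENNReal.ofReal (δ / 2) ≠ 0 := by
    simp [ENNReal.ofReal_eq_zero]; linarith
  obtain ⟨V, hUV, hVopen, _, hVU⟩ := hUm.exists_isOpen_diff_lt (measure_ne_top ν U) hε'
  -- express V as union of rational intervals
  set g : ℚ × ℚ → Set ℝ := fun q =>
    if Set.Ioo (q.1 : ℝ) (q.2 : ℝ) ⊆ V then Set.Ioo (q.1 : ℝ) (q.2 : ℝ) else ∅ with hg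
  have hgV : ∀ q, g q ⊆ V := by
    intro q; rw [hg]; dsimp only; split
    · assumption
    · exact empty_subset _
  have hgU : (⋃ q, g q) = V := by
    apply subset_antisymm (iUnion_subset hgV)
    intro x hx
    obtain ⟨v, hvB, hxv, hvV⟩ :=
      Real.isTopologicalBasis_Ioo_rat.exists_subset_of_mem_open hx hVopen
    simp only [mem_iUnion] at hvB
    obtain ⟨a, b, hab, hv⟩ := hvB
    simp only [mem_singleton_iff] at hv
    subst hv
    refine mem_iUnion.2 ⟨(a, b), ?_⟩
    rw [hg]; dsimp only; rw [if_pos hvV]; exact hxv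
  set F : Finset (ℚ × ℚ) → Set ℝ := fun s => ⋃ q ∈ s, g q with hF
  have hFV : ∀ s, F s ⊆ V := fun s => iUnion₂_subset fun q _ => hgV q
  have hFm : ∀ s, MeasurableSet (F s) := by
    intro s
    refine MeasurableSet.biUnion s.countable_toSet fun q _ => ?_
    rw [hg]; dsimp only; split
    · exact measurableSet_Ioo
    · exact MeasurableSet.empty
  have hdir : Directed (fun x1 x2 => x1 ⊆ x2) F := by
    intro s t
    exact ⟨s ∪ t, biUnion_subset_biUnion_left (s.subset_union_left),
      biUnion_subset_biUnion_left (s.subset_union_right)⟩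
  have hFUnion : (⋃ s, F s) = V := by
    rw [← hgU]
    apply subset_antisymm
    · exact iUnion_subset fun s => iUnion₂_subset fun q _ => subset_iUnion g q
    · exact iUnion_subset fun q => subset_trans
        (by simp [hF]) (subset_iUnion F {q})
  have hsup : ν V = ⨆ s, ν (F s) := by
    rw [← hFUnion]; exact hdir.measure_iUnion (μ := ν)
  -- pick s
  have : ν V < ⨆ s, (ν (F s) + ENNReal.ofReal (δ / 2)) := by
    rw [← ENNReal.iSup_add, ← hsup]
    exact ENNReal.lt_add_right (measure_ne_top ν V) hε'
  obtain ⟨s, hs⟩ := lt_iSup_iff.1 this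
  refine ⟨s.filter (fun q => Set.Ioo (q.1 : ℝ) (q.2 : ℝ) ⊆ V), ?_⟩
  have hAF : (⋃ q ∈ s.filter (fun q => Set.Ioo (q.1 : ℝ) (q.2 : ℝ) ⊆ V),
      Set.Ioo (q.1 : ℝ) (q.2 : ℝ)) = F s := by
    rw [hF]
    ext x
    simp only [mem_iUnion, Finset.mem_filter]
    constructor
    · rintro ⟨q, ⟨hqs, hqV⟩, hx⟩
      exact ⟨q, hqs, by rw [hg]; dsimp only; rw [if_pos hqV]; exact hx⟩
    · rintro ⟨q, hqs, hx⟩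
      rw [hg] at hx; dsimp only at hx
      by_cases hqV : Set.Ioo (q.1 : ℝ) (q.2 : ℝ) ⊆ V
      · rw [if_pos hqV] at hx; exact ⟨q, ⟨hqs, hqV⟩, hx⟩
      · rw [if_neg hqV] at hx; exact absurd hx (notMem_empty x)
  rw [hAF, hmax]
  set A := F s with hA
  have hAm : MeasurableSet A := hFm s
  have hAV : A ⊆ V := hFV s
  -- ν (V \ A) ≤ δ/2
  have hVA : ν (V \ A) ≤ ENNReal.ofReal (δ / 2) := by
    rw [measure_diff hAV hAm.nullMeasurableSet (measure_ne_top ν A)]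
    rw [tsub_le_iff_right]
    calc ν V ≤ ν (F s) + ENNReal.ofReal (δ / 2) := le_of_lt hs
    _ = ENNReal.ofReal (δ / 2) + ν A := add_comm _ _
  -- integral estimates
  have hIU : IntegrableOn h U volume := hi.integrableOn
  have hIA : IntegrableOn h A volume := hi.integrableOn
  have hsplitU : ∫ x in U, h x = (∫ x in U ∩ A, h x) + ∫ x in U \ A, h x :=
    (integral_inter_add_diff hAm hIU).symm
  have hsplitA : ∫ x in A, h x = (∫ x in A ∩ U, h x) + ∫ x in A \ U, h x :=
    (integral_inter_add_diff hUm hIA).symm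
  have habsE : ∀ E : Set ℝ, MeasurableSet E → E ⊆ V →
      |∫ x in E, h x| ≤ δ / 2 → True := fun _ _ _ _ => trivial
  have key : ∀ (E W : Set ℝ), MeasurableSet E → ν W ≤ ENNReal.ofReal (δ / 2) → E ⊆ W →
      |∫ x in E, h x| ≤ δ / 2 := by
    intro E W hE hW hEW
    calc |∫ x in E, h x| ≤ ∫ x in E, |h x| := by
          simpa [Real.norm_eq_abs] using norm_integral_le_integral_norm (μ := volume.restrict E) h
    _ = (ν E).toReal := by rw [hνE E hE, ENNReal.toReal_ofReal (integral_nonneg fun x => abs_nonneg _)]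
    _ ≤ δ / 2 := by
        apply ENNReal.toReal_le_of_le_ofReal (by linarith)
        exact le_trans (measure_mono hEW) hW
  have h1 : |∫ x in U \ A, h x| ≤ δ / 2 :=
    key _ (V \ A) (hUm.diff hAm) hVA (diff_subset_diff_left hUV)
  have h2 : |∫ x in A \ U, h x| ≤ δ / 2 :=
    key _ (V \ U) (hAm.diff hUm) (le_of_lt hVU) (diff_subset_diff_left hAV)
  have := abs_le.1 h1
  have := abs_le.1 h2
  rw [hsplitU, hsplitA, inter_comm U A]
  linarith

lemma half_abs_integral (h : ℝ → ℝ) (hi : Integrable h volume) (h0 : ∫ x, h x = 0) :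
    (1 / 2) * ∫ x, |h x| = ∫ x, max (h x) 0 := by
  have hpos : Integrable (fun x => max (h x) 0) volume := hi.pos_part
  have hneg : Integrable (fun x => max (-h x) 0) volume := hi.neg.pos_part
  have habs : ∫ x, |h x| = (∫ x, max (h x) 0) + ∫ x, max (-h x) 0 := by
    rw [← integral_add hpos hneg]
    congr 1; ext x
    rcases le_total 0 (h x) with hx | hx
    · simp [abs_of_nonneg hx, max_eq_left hx, max_eq_right (neg_nonpos.2 hx)]
    · simp [abs_of_nonpos hx, max_eq_right hx, max_eq_left (neg_nonneg.2 hx)]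
  have hsub : ∫ x, h x = (∫ x, max (h x) 0) - ∫ x, max (-h x) 0 := by
    rw [← integral_sub hpos hneg]
    congr 1; ext x
    rcases le_total 0 (h x) with hx | hx
    · simp [max_eq_left hx, max_eq_right (neg_nonpos.2 hx)]
    · simp [max_eq_right hx, max_eq_left (neg_nonneg.2 hx)]
  rw [h0] at hsub
  rw [habs]; linarith

open Set in
/-- The total variation distance between the conditional law of `ξ` given `η = y`
and the marginal law of `ξ` is bounded by the uniform φ-mixing coefficient
`φ(ξ, η)`, for almost every `y` with respect to the law of `η`. -/
theorem tv_conditional_le_phiCoef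
    {Ω : Type*} [mΩ : MeasurableSpace Ω] (P : Measure Ω) [IsProbabilityMeasure P]
    (d : ℕ) (ξ : Ω → ℝ) (η : Ω → (Fin d → ℝ))
    (hξ : Measurable ξ) (hη : Measurable η)
    (pj : ℝ × (Fin d → ℝ) → ℝ) (hpj_meas : Measurable pj) (hpj_nonneg : ∀ z, 0 ≤ pj z)
    (h_density : P.map (fun ω => (ξ ω, η ω)) =
      (volume : Measure (ℝ × (Fin d → ℝ))).withDensity fun z => ENNReal.ofReal (pj z)) :
    ∀ᵐ y ∂(P.map η),
      0 < (∫ x, pj (x, y)) →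
        (1 / 2) * ∫ x, |(∫ y', pj (x, y')) - pj (x, y) / (∫ x', pj (x', y))|
          ≤ phiCoef P ξ η := by
  classical
  set ρ : ℝ × (Fin d → ℝ) → ENNReal := fun z => ENNReal.ofReal (pj z) with hρ
  have hρ_meas : Measurable ρ := hpj_meas.ennreal_ofReal
  set pξ : ℝ → ℝ := fun x => ∫ y', pj (x, y') with hpξdef
  set c : (Fin d → ℝ) → ℝ := fun y => ∫ x, pj (x, y) with hcdef
  have hpair : Measurable fun ω => (ξ ω, η ω) := hξ.prodMk hη
  -- total mass one
  have hρ1 : ∫⁻ z, ρ z = 1 := by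
    have h1 : (P.map fun ω => (ξ ω, η ω)) Set.univ = 1 := by
      have : IsProbabilityMeasure (P.map fun ω => (ξ ω, η ω)) :=
        Measure.isProbabilityMeasure_map hpair.aemeasurable
      exact measure_univ
    rw [h_density, withDensity_apply _ MeasurableSet.univ, setLIntegral_univ] at h1
    exact h1
  -- integrability of pj
  have hpj_int : Integrable pj volume := by
    refine ⟨hpj_meas.aestronglyMeasurable, ?_⟩
    rw [HasFiniteIntegral]
    have : ∀ z, ‖pj z‖ₑ = ρ z := by
      intro z
      rw [hρ]; dsimp only
      rw [Real.enorm_eq_ofReal_abs, abs_of_nonneg (hpj_nonneg z)]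
    rw [lintegral_congr this, hρ1]
    exact ENNReal.one_lt_top
  have hpj_int' : Integrable pj (volume.prod volume) := by
    rwa [← Measure.volume_eq_prod]
  have hρ1' : ∫⁻ z, ρ z ∂(volume.prod volume) = 1 := by rwa [← Measure.volume_eq_prod]
  -- pξ facts
  have hpξ_meas : Measurable pξ :=
    (hpj_meas.stronglyMeasurable.integral_prod_right').measurable
  have hpξ_nonneg : ∀ x, 0 ≤ pξ x := fun x => integral_nonneg fun y => hpj_nonneg _
  have hpξ_int : Integrable pξ volume := by
    have := hpj_int'.integral_prod_left
    exact this
  have hpj_one : ∫ z, pj z ∂(volume.prod volume) = 1 := by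
    rw [integral_eq_lintegral_of_nonneg_ae (Filter.Eventually.of_forall hpj_nonneg)
      hpj_meas.aestronglyMeasurable, hρ1']
    rfl
  have hpξ_one : ∫ x, pξ x = 1 := by
    have hu : Integrable (Function.uncurry fun x y => pj (x, y)) (volume.prod volume) :=
      hpj_int'
    rw [hpξdef]
    calc ∫ x, ∫ y', pj (x, y') = ∫ z, pj (z.1, z.2) ∂(volume.prod volume) :=
          integral_integral hu
      _ = 1 := by rw [← hpj_one]
  -- c facts
  have hc_meas : Measurable c := by
    have : StronglyMeasurable (Function.uncurry fun x y => pj (x, y)) :=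
      hpj_meas.stronglyMeasurable
    exact this.integral_prod_left.measurable
  have hc_int : ∀ y, 0 < c y → Integrable (fun x => pj (x, y)) volume := by
    intro y hy
    by_contra hcon
    rw [hcdef] at hy; dsimp only at hy
    rw [integral_undef hcon] at hy
    exact lt_irrefl 0 hy
  have hc_lint : ∀ y, 0 < c y → ∫⁻ x, ρ (x, y) = ENNReal.ofReal (c y) := by
    intro y hy
    rw [hcdef]
    exact (ofReal_integral_eq_lintegral_ofReal (hc_int y hy)
      (Filter.Eventually.of_forall fun x => hpj_nonneg _)).symm
  -- a.e. x : integrable slice and lintegral = ofReal pξ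
  have hae_x : ∀ᵐ x ∂(volume : Measure ℝ), ∫⁻ y, ρ (x, y) = ENNReal.ofReal (pξ x) := by
    filter_upwards [hpj_int'.prod_right_ae] with x hx
    rw [hpξdef]
    exact (ofReal_integral_eq_lintegral_ofReal hx
      (Filter.Eventually.of_forall fun y => hpj_nonneg _)).symm
  -- phiCoef facts
  set S : Set ℝ := {r : ℝ | ∃ A B : Set Ω,
    MeasurableSet[MeasurableSpace.comap ξ inferInstance] A ∧
    MeasurableSet[MeasurableSpace.comap η inferInstance] B ∧ P B ≠ 0 ∧
    r = |(P A).toReal - (P (A ∩ B)).toReal / (P B).toReal|} with hS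
  have hphi_def : phiCoef P ξ η = sSup S := rfl
  have hbdd : BddAbove S := by
    refine ⟨1, fun r hr => ?_⟩
    obtain ⟨A, B, hA, hB, hBne, hr⟩ := hr
    have hPA : (P A).toReal ≤ 1 := by
      apply ENNReal.toReal_le_of_le_ofReal zero_le_one
      rw [ENNReal.ofReal_one]
      exact prob_le_one
    have hPA0 : 0 ≤ (P A).toReal := ENNReal.toReal_nonneg
    have hPBt : (P B).toReal ≠ 0 := by
      simp [ENNReal.toReal_eq_zero_iff, hBne, measure_ne_top P B]
    have hPB0 : 0 < (P B).toReal :=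
      lt_of_le_of_ne ENNReal.toReal_nonneg (Ne.symm hPBt)
    have hratio : (P (A ∩ B)).toReal / (P B).toReal ≤ 1 := by
      rw [div_le_one hPB0]
      exact ENNReal.toReal_mono (measure_ne_top P B)
        (measure_mono Set.inter_subset_right)
    have hratio0 : 0 ≤ (P (A ∩ B)).toReal / (P B).toReal :=
      div_nonneg ENNReal.toReal_nonneg ENNReal.toReal_nonneg
    rw [hr]
    rw [abs_le]
    constructor <;> linarith
  have hphi0 : 0 ≤ phiCoef P ξ η := by
    rw [hphi_def]
    have h0 : (0 : ℝ) ∈ S := by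
      refine ⟨∅, Set.univ, ?_, ?_, ?_, ?_⟩
      · exact @MeasurableSet.empty _ (MeasurableSpace.comap ξ inferInstance)
      · exact @MeasurableSet.univ _ (MeasurableSpace.comap η inferInstance)
      · simp
      · simp
    exact le_csSup hbdd h0
  set φ := phiCoef P ξ η with hφdef
  -- the key claim
  have key : ∀ ε : ℝ, 0 < ε → ∀ᵐ y ∂(P.map η),
      ¬(0 < c y ∧ φ + ε < ∫ x, max (pξ x - pj (x, y) / c y) 0) := by
    intro ε hε
    set Us : Finset (ℚ × ℚ) → Set ℝ :=
      fun s => ⋃ q ∈ s, Set.Ioo (q.1 : ℝ) (q.2 : ℝ) with hUs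
    have hUsm : ∀ s, MeasurableSet (Us s) := fun s =>
      MeasurableSet.biUnion s.countable_toSet fun q _ => measurableSet_Ioo
    set Ts : Finset (ℚ × ℚ) → Set (Fin d → ℝ) := fun s =>
      {y | 0 < c y ∧ φ + ε / 2 < ∫ x in Us s, (pξ x - pj (x, y) / c y)} with hTs
    -- measurability of Ts
    have hTs_meas : ∀ s, MeasurableSet (Ts s) := by
      intro s
      have h1 : MeasurableSet {y | 0 < c y} := measurableSet_lt measurable_const hc_meas
      have h2 : Measurable fun y => ∫ x in Us s, (pξ x - pj (x, y) / c y) := by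
        have hjm : Measurable fun z : ℝ × (Fin d → ℝ) =>
            (Us s).indicator (fun x => pξ x - pj (x, z.2) / c z.2) z.1 := by
          have : (fun z : ℝ × (Fin d → ℝ) =>
              (Us s).indicator (fun x => pξ x - pj (x, z.2) / c z.2) z.1) =
              (Prod.fst ⁻¹' (Us s)).indicator
                (fun z : ℝ × (Fin d → ℝ) => pξ z.1 - pj z / c z.2) := by
            ext z
            by_cases hz : z.1 ∈ Us s
            · rw [Set.indicator_of_mem hz,
                Set.indicator_of_mem (show z ∈ Prod.fst ⁻¹' (Us s) from hz)]
            · rw [Set.indicator_of_notMem hz,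
                Set.indicator_of_notMem (show z ∉ Prod.fst ⁻¹' (Us s) from hz)]
          rw [this]
          exact Measurable.indicator
            ((hpξ_meas.comp measurable_fst).sub
              (hpj_meas.div (hc_meas.comp measurable_snd)))
            ((hUsm s).preimage measurable_fst)
        have hsm : StronglyMeasurable fun y =>
            ∫ x, (Us s).indicator (fun x => pξ x - pj (x, y) / c y) x := by
          apply StronglyMeasurable.integral_prod_left
            (f := fun x y => (Us s).indicator (fun x' => pξ x' - pj (x', y) / c y) x)
          exact (by exact hjm : Measurable (Function.uncurry fun x y =>
            (Us s).indicator (fun x' => pξ x' - pj (x', y) / c y) x)).stronglyMeasurable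
        have heq : (fun y => ∫ x in Us s, (pξ x - pj (x, y) / c y)) =
            fun y => ∫ x, (Us s).indicator (fun x => pξ x - pj (x, y) / c y) x := by
          ext y
          rw [integral_indicator (hUsm s)]
        rw [heq]
        exact hsm.measurable
      exact h1.inter (measurableSet_lt measurable_const h2)
    -- each Ts is null
    have hTs_null : ∀ s, (P.map η) (Ts s) = 0 := by
      intro s
      by_contra hTs_ne
      set A₀ := Us s with hA₀def
      set B₀ := Ts s with hB₀def
      have hA₀m : MeasurableSet A₀ := hUsm s
      have hB₀m : MeasurableSet B₀ := hTs_meas s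
      set a : ℝ := ∫ x in A₀, pξ x with hadef
      set κ : ℝ := a - φ - ε / 2 with hκdef
      -- pointwise facts on B₀
      have hpoint : ∀ y ∈ B₀, ∫⁻ x in A₀, ρ (x, y) ≤
          ENNReal.ofReal κ * ENNReal.ofReal (c y) ∧
          ∫⁻ x, ρ (x, y) = ENNReal.ofReal (c y) ∧ 0 ≤ κ := by
        intro y hy
        obtain ⟨hcy, hlt⟩ := hy
        have hint_y : Integrable (fun x => pj (x, y)) volume := hc_int y hcy
        have hintA : ∫ x in A₀, (pξ x - pj (x, y) / c y) =
            a - (∫ x in A₀, pj (x, y)) / c y := by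
          rw [integral_sub hpξ_int.integrableOn ((hint_y.div_const (c y)).integrableOn)]
          rw [integral_div]
        rw [hintA] at hlt
        have hb0 : 0 ≤ ∫ x in A₀, pj (x, y) :=
          integral_nonneg fun x => hpj_nonneg _
        have hblt : ∫ x in A₀, pj (x, y) < κ * c y := by
          rw [hκdef]
          have := sub_lt_sub_iff_left (a := a) |>.2 hlt
          have h2 : (∫ x in A₀, pj (x, y)) / c y < a - (φ + ε / 2) := by linarith
          calc ∫ x in A₀, pj (x, y) = ((∫ x in A₀, pj (x, y)) / c y) * c y := by
                field_simp
          _ < (a - (φ + ε / 2)) * c y := by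
                exact mul_lt_mul_of_pos_right h2 hcy
          _ = (a - φ - ε / 2) * c y := by ring
        have hκ0 : 0 ≤ κ := by
          by_contra hκneg
          push_neg at hκneg
          have : κ * c y < 0 := mul_neg_of_neg_of_pos hκneg hcy
          linarith
        refine ⟨?_, ?_, hκ0⟩
        · have h1 : ∫⁻ x in A₀, ρ (x, y) = ENNReal.ofReal (∫ x in A₀, pj (x, y)) := by
            exact (ofReal_integral_eq_lintegral_ofReal hint_y.integrableOn
              (Filter.Eventually.of_forall fun x => hpj_nonneg _)).symm
          rw [h1, ← ENNReal.ofReal_mul hκ0]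
          exact ENNReal.ofReal_le_ofReal hblt.le
        · exact hc_lint y hcy
      have hκ0 : 0 ≤ κ := by
        obtain ⟨y, hy⟩ := nonempty_of_measure_ne_zero hTs_ne
        exact (hpoint y hy).2.2
      -- events
      set A : Set Ω := ξ ⁻¹' A₀ with hAdef
      set B : Set Ω := η ⁻¹' B₀ with hBdef
      have hPB : P B = (P.map η) B₀ := (Measure.map_apply hη hB₀m).symm
      have hPB_ne : P B ≠ 0 := by rw [hPB]; exact hTs_ne
      have hPB_top : P B ≠ ⊤ := measure_ne_top P B
      -- compute P A
      have hmap : ∀ (E : Set (ℝ × (Fin d → ℝ))), MeasurableSet E →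
          P ((fun ω => (ξ ω, η ω)) ⁻¹' E) = ∫⁻ z in E, ρ z := by
        intro E hE
        rw [← Measure.map_apply hpair hE, h_density, withDensity_apply _ hE]
      have hPA_eq : P A = ENNReal.ofReal a := by
        have h1 : A = (fun ω => (ξ ω, η ω)) ⁻¹' (A₀ ×ˢ Set.univ) := by
          ext ω; simp [hAdef]
        rw [h1, hmap _ (hA₀m.prod MeasurableSet.univ)]
        rw [Measure.volume_eq_prod, ← Measure.prod_restrict,
          lintegral_prod _ hρ_meas.aemeasurable]
        simp only [Measure.restrict_univ]
        have h2 : ∫⁻ x in A₀, ∫⁻ y, ρ (x, y) = ∫⁻ x in A₀, ENNReal.ofReal (pξ x) :=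
          lintegral_congr_ae (ae_restrict_of_ae hae_x)
        rw [h2]
        exact (ofReal_integral_eq_lintegral_ofReal hpξ_int.integrableOn
          (Filter.Eventually.of_forall fun x => hpξ_nonneg x)).symm
      have hPAB_eq : P (A ∩ B) = ∫⁻ y in B₀, ∫⁻ x in A₀, ρ (x, y) := by
        have h1 : A ∩ B = (fun ω => (ξ ω, η ω)) ⁻¹' (A₀ ×ˢ B₀) := by
          ext ω; simp [hAdef, hBdef]
        rw [h1, hmap _ (hA₀m.prod hB₀m)]
        rw [Measure.volume_eq_prod, ← Measure.prod_restrict,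
          lintegral_prod_symm _ hρ_meas.aemeasurable]
      have hPB_eq : P B = ∫⁻ y in B₀, ENNReal.ofReal (c y) := by
        have h1 : B = (fun ω => (ξ ω, η ω)) ⁻¹' (Set.univ ×ˢ B₀) := by
          ext ω; simp [hBdef]
        rw [h1, hmap _ (MeasurableSet.univ.prod hB₀m)]
        rw [Measure.volume_eq_prod, ← Measure.prod_restrict,
          lintegral_prod_symm _ hρ_meas.aemeasurable]
        simp only [Measure.restrict_univ]
        apply lintegral_congr_ae
        filter_upwards [ae_restrict_mem hB₀m] with y hy
        exact (hpoint y hy).2.1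
      have hineq : P (A ∩ B) ≤ ENNReal.ofReal κ * P B := by
        rw [hPAB_eq, hPB_eq, ← lintegral_const_mul _ hc_meas.ennreal_ofReal]
        apply lintegral_mono_ae
        filter_upwards [ae_restrict_mem hB₀m] with y hy
        exact (hpoint y hy).1
      have ha0 : 0 ≤ a := integral_nonneg fun x => hpξ_nonneg x
      have h2 : (P (A ∩ B)).toReal ≤ κ * (P B).toReal := by
        have h3 := ENNReal.toReal_mono
          (ENNReal.mul_ne_top ENNReal.ofReal_ne_top hPB_top) hineq
        rwa [ENNReal.toReal_mul, ENNReal.toReal_ofReal hκ0] at h3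
      have hPBpos : 0 < (P B).toReal := ENNReal.toReal_pos hPB_ne hPB_top
      have hratio : (P (A ∩ B)).toReal / (P B).toReal ≤ κ := by
        rw [div_le_iff₀ hPBpos]; exact h2
      have hr_mem : |(P A).toReal - (P (A ∩ B)).toReal / (P B).toReal| ∈ S := by
        refine ⟨A, B, ?_, ?_, hPB_ne, rfl⟩
        · exact ⟨A₀, hA₀m, rfl⟩
        · exact ⟨B₀, hB₀m, rfl⟩
      have hφge : |(P A).toReal - (P (A ∩ B)).toReal / (P B).toReal| ≤ φ := by
        rw [hphi_def]
        exact le_csSup hbdd hr_mem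
      have hPA_toReal : (P A).toReal = a := by
        rw [hPA_eq, ENNReal.toReal_ofReal ha0]
      rw [hPA_toReal] at hφge
      have hlow : φ + ε / 2 ≤ a - (P (A ∩ B)).toReal / (P B).toReal := by
        rw [hκdef] at hratio; linarith
      have := le_abs_self (a - (P (A ∩ B)).toReal / (P B).toReal)
      linarith
    -- T ⊆ ⋃ Ts
    have hT : (P.map η)
        {y | 0 < c y ∧ φ + ε < ∫ x, max (pξ x - pj (x, y) / c y) 0} = 0 := by
      apply measure_mono_null ?_ (measure_iUnion_null_iff.2 hTs_null)
      rintro y ⟨hcy, hlt⟩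
      have hm : Measurable fun x => pξ x - pj (x, y) / c y :=
        hpξ_meas.sub ((hpj_meas.comp (measurable_id.prodMk measurable_const)).div_const _)
      have hi : Integrable (fun x => pξ x - pj (x, y) / c y) volume :=
        hpξ_int.sub ((hc_int y hcy).div_const _)
      obtain ⟨s, hs⟩ := approx_pos_part _ hm hi (half_pos hε)
      refine Set.mem_iUnion.2 ⟨s, hcy, ?_⟩
      calc φ + ε / 2 = φ + ε - ε / 2 := by ring
        _ < (∫ x, max (pξ x - pj (x, y) / c y) 0) - ε / 2 := by linarith
        _ ≤ ∫ x in Us s, (pξ x - pj (x, y) / c y) := by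
            have hs' : (∫ x, max (pξ x - pj (x, y) / c y) 0) ≤
                (∫ x in Us s, (pξ x - pj (x, y) / c y)) + ε / 2 := hs
            linarith
    rw [ae_iff]
    exact measure_mono_null (fun y hy => not_not.1 hy) hT
  -- assemble
  have hall : ∀ᵐ y ∂(P.map η), ∀ n : ℕ,
      ¬(0 < c y ∧ φ + 1 / (n + 1) < ∫ x, max (pξ x - pj (x, y) / c y) 0) :=
    ae_all_iff.2 fun n => key (1 / (n + 1)) (by positivity)
  filter_upwards [hall] with y hy hcy
  have hcy' : 0 < c y := hcy
  have hFp : ∫ x, max (pξ x - pj (x, y) / c y) 0 ≤ φ := by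
    by_contra hcon
    push_neg at hcon
    obtain ⟨n, hn⟩ := exists_nat_one_div_lt (sub_pos.2 hcon)
    exact hy n ⟨hcy', by linarith⟩
  have hint : Integrable (fun x => pξ x - pj (x, y) / c y) volume :=
    hpξ_int.sub ((hc_int y hcy').div_const _)
  have hzero : ∫ x, (pξ x - pj (x, y) / c y) = 0 := by
    rw [integral_sub hpξ_int ((hc_int y hcy').div_const _), hpξ_one, integral_div]
    have : ∫ x, pj (x, y) = c y := rfl
    rw [this, div_self (ne_of_gt hcy'), sub_self]
  calc (1 / 2) * ∫ x, |pξ x - pj (x, y) / c y|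
      = ∫ x, max (pξ x - pj (x, y) / c y) 0 := half_abs_integral _ hint hzero
    _ ≤ φ := hFp
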